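/- Choice of abscissa for discrete stage order five: In the setting of the two-stage explicit TSRK method of uniform order five (s = 2, c_1 = 0, coefficients u_2(α) = (α+1)²·(1 − 2α + 3α²/(2c_2−1)), ã_{21}(α) = α²(α+1) − α²(α+1)²(3c_2−1)/(2c_2(2c_2−1)), ã_{22}(α) = α²(α+1)²/(2c_2(c_2−1)(2c_2−1)), a_{21}(α) = α(α+1)²·(1 − α(3c_2−2)/(2(2c_2−1)(c_2−1))), a_{22} = 0), define Γ_{2,5}(α) := (1/4!)·[ −(1−u_2(α))/5 + ã_{21}(α) + ã_{22}(α)·(1−c_2)^4 + a_{21}(α)·c_1^4 − α^5/5 ]. Then for c_2 = (11−√41)/10 one has Γ_{2,5}(1) = 0. (Indeed, Γ_{2,5}(1) vanishes exactly when 5c_2² − 11c_2 + 4 = 0, i.e. c_2 = (11±√41)/10.) -/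

import Mathlib

/-- The order polynomial `Γ_{ik}` of a two-stage TSRK method, for the row with
coefficients `u, ã_{i1}, ã_{i2}, a_{i1}, a_{i2}` and abscissae `c₁, c₂`. -/
noncomputable def Gamma2 (c₁ c₂ : ℝ) (u at1 at2 a1 a2 : ℝ → ℝ) (k : ℕ) (α : ℝ) : ℝ :=
  (1 / (Nat.factorial (k - 1) : ℝ)) *
    ((1 - u α) * (-1) ^ k / k
      + at1 α * (-(1 - c₁)) ^ (k - 1) + at2 α * (-(1 - c₂)) ^ (k - 1)
      + a1 α * c₁ ^ (k - 1) + a2 α * c₂ ^ (k - 1)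
      - α ^ k / k)

/-- Choice of abscissa for discrete stage order five: for the fifth-order two-stage
explicit TSRK method, the stage order polynomial `Γ_{2,5}` vanishes at `α = 1` for
`c₂ = (11 − √41)/10`. -/
theorem two_stage_tsrk_discrete_stage_order_five (c₂ : ℝ)
    (hc₂ : c₂ = (11 - Real.sqrt 41) / 10) :
    Gamma2 0 c₂
      (fun α => (α + 1) ^ 2 * (1 - 2 * α + 3 * α ^ 2 / (2 * c₂ - 1)))
      (fun α => α ^ 2 * (α + 1) -
        α ^ 2 * (α + 1) ^ 2 * (3 * c₂ - 1) / (2 * c₂ * (2 * c₂ - 1)))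
      (fun α => α ^ 2 * (α + 1) ^ 2 / (2 * c₂ * (c₂ - 1) * (2 * c₂ - 1)))
      (fun α => α * (α + 1) ^ 2 *
        (1 - α * (3 * c₂ - 2) / (2 * (2 * c₂ - 1) * (c₂ - 1))))
      (fun _ => 0) 5 1 = 0 := by
  have hs : Real.sqrt 41 ^ 2 = 41 := Real.sq_sqrt (by norm_num)
  have hs6 : Real.sqrt 41 < 7 := by nlinarith [Real.sqrt_nonneg 41]
  have hs5 : (6:ℝ) < Real.sqrt 41 := by nlinarith [Real.sqrt_nonneg 41]
  have h1 : c₂ > 0 := by rw [hc₂]; nlinarith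
  have h2 : 2 * c₂ - 1 < 0 := by rw [hc₂]; nlinarith
  have h3 : c₂ - 1 < 0 := by rw [hc₂]; nlinarith
  have h1' : c₂ ≠ 0 := ne_of_gt h1
  have h2' : 2 * c₂ - 1 ≠ 0 := ne_of_lt h2
  have h3' : c₂ - 1 ≠ 0 := ne_of_lt h3
  have key : 5 * c₂ ^ 2 - 11 * c₂ + 4 = 0 := by rw [hc₂]; nlinarith
  simp only [Gamma2]
  field_simp
  linear_combination (4 * c₂ ^ 2 + -4 * c₂ ^ 1) * key
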